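/- A finite poset P satisfies: the Heyting algebra Up(P) of all upsets is generated by a finite subset G if and only if every point of P is G-isolated, i.e., for all x ≠ y there is n with x ≁^G_n y. -/

import Mathlib

/-- The bisimulation-style relations `∼^G_n` on a preordered set, relative to a
family `G` of subsets. -/
def simRel {α : Type*} [Preorder α] (G : Set (Set α)) : ℕ → α → α → Prop
  | 0 => fun x y => ∀ g ∈ G, (x ∈ g ↔ y ∈ g)
  | n + 1 => fun x y =>
      (∀ z, x ≤ z → ∃ w, y ≤ w ∧ simRel G n z w) ∧
      (∀ w, y ≤ w → ∃ z, x ≤ z ∧ simRel G n z w)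


/-- Heyting implication of subsets of a poset: `U → V = (↓(U \ V))ᶜ`,
equivalently the set of points all of whose successors in `U` lie in `V`. -/
def himpSet {α : Type*} [Preorder α] (U V : Set α) : Set α :=
  {x | ∀ y, x ≤ y → y ∈ U → y ∈ V}

/-- Membership in the Heyting subalgebra of `Up(P)` generated by `G`:
the closure of `G` under `∅`, `univ`, intersection, union and Heyting
implication of upsets. -/
inductive HGen {α : Type*} [Preorder α] (G : Set (Set α)) : Set α → Prop
  | base {U : Set α} : U ∈ G → HGen G U
  | bot : HGen G ∅
  | top : HGen G Set.univ
  | inf {U V : Set α} : HGen G U → HGen G V → HGen G (U ∩ V)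
  | sup {U V : Set α} : HGen G U → HGen G V → HGen G (U ∪ V)
  | himp {U V : Set α} : HGen G U → HGen G V → HGen G (himpSet U V)

section Aux

variable {α : Type*} [Preorder α] {G : Set (Set α)}

lemma simRel_refl (n : ℕ) : ∀ x : α, simRel G n x x := by
  induction n with
  | zero => intro x; exact fun g _ => Iff.rfl
  | succ n ih =>
    intro x
    exact ⟨fun z hz => ⟨z, hz, ih z⟩, fun w hw => ⟨w, hw, ih w⟩⟩

lemma simRel_symm : ∀ {n : ℕ} {x y : α}, simRel G n x y → simRel G n y x := by
  intro n
  induction n with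
  | zero => intro x y h g hg; exact (h g hg).symm
  | succ n ih =>
    intro x y h
    exact ⟨fun z hz => (h.2 z hz).imp fun w hw => ⟨hw.1, ih hw.2⟩,
      fun w hw => (h.1 w hw).imp fun z hz => ⟨hz.1, ih hz.2⟩⟩

lemma simRel_succ (hG : ∀ g ∈ G, IsUpperSet g) :
    ∀ {n : ℕ} {x y : α}, simRel G (n + 1) x y → simRel G n x y := by
  intro n
  induction n with
  | zero =>
    intro x y h g hg
    constructor
    · intro hx
      obtain ⟨z, hz, hzy⟩ := h.2 y le_rfl
      exact (hzy g hg).mp (hG g hg hz hx)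
    · intro hy
      obtain ⟨w, hw, hxw⟩ := h.1 x le_rfl
      exact (hxw g hg).mpr (hG g hg hw hy)
  | succ n ih =>
    intro x y h
    exact ⟨fun z hz => (h.1 z hz).imp fun w hw => ⟨hw.1, ih hw.2⟩,
      fun w hw => (h.2 w hw).imp fun z hz => ⟨hz.1, ih hz.2⟩⟩

lemma simRel_mono (hG : ∀ g ∈ G, IsUpperSet g) :
    ∀ {n m : ℕ}, m ≤ n → ∀ {x y : α}, simRel G n x y → simRel G m x y := by
  intro n
  induction n with
  | zero =>
    intro m hm
    obtain rfl := Nat.le_zero.mp hm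
    exact fun h => h
  | succ n ih =>
    intro m hm x y hxy
    rcases Nat.eq_or_lt_of_le hm with rfl | hm'
    · exact hxy
    · exact ih (Nat.lt_succ_iff.mp hm') (simRel_succ hG hxy)

lemma hgen_biUnion {β : Type*} {s : Set β} (hs : s.Finite) (f : β → Set α)
    (h : ∀ i ∈ s, HGen G (f i)) : HGen G (⋃ i ∈ s, f i) := by
  revert h
  refine Set.Finite.induction_on (motive := fun s _ => (∀ i ∈ s, HGen G (f i)) → HGen G (⋃ i ∈ s, f i)) s hs (fun _ => by simpa using HGen.bot) ?_
  intro a s _ _ ih h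
  rw [Set.biUnion_insert]
  exact HGen.sup (h a (Set.mem_insert a s)) (ih fun i hi => h i (Set.mem_insert_of_mem a hi))

lemma hgen_biInter {β : Type*} {s : Set β} (hs : s.Finite) (f : β → Set α)
    (h : ∀ i ∈ s, HGen G (f i)) : HGen G (⋂ i ∈ s, f i) := by
  revert h
  refine Set.Finite.induction_on (motive := fun s _ => (∀ i ∈ s, HGen G (f i)) → HGen G (⋂ i ∈ s, f i)) s hs (fun _ => by simpa using HGen.top) ?_
  intro a s _ _ ih h
  rw [Set.biInter_insert]
  exact HGen.inf (h a (Set.mem_insert a s)) (ih fun i hi => h i (Set.mem_insert_of_mem a hi))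

lemma hgen_inv (hG : ∀ g ∈ G, IsUpperSet g) {U : Set α} (h : HGen G U) :
    ∃ n, ∀ x y, simRel G n x y → (x ∈ U ↔ y ∈ U) := by
  induction h with
  | base hU => exact ⟨0, fun x y h => h _ hU⟩
  | bot => exact ⟨0, by simp⟩
  | top => exact ⟨0, by simp⟩
  | inf hU hV ihU ihV =>
    obtain ⟨nU, hU'⟩ := ihU
    obtain ⟨nV, hV'⟩ := ihV
    exact ⟨max nU nV, fun x y h =>
      and_congr (hU' x y (simRel_mono hG (le_max_left _ _) h))
        (hV' x y (simRel_mono hG (le_max_right _ _) h))⟩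
  | sup hU hV ihU ihV =>
    obtain ⟨nU, hU'⟩ := ihU
    obtain ⟨nV, hV'⟩ := ihV
    exact ⟨max nU nV, fun x y h =>
      or_congr (hU' x y (simRel_mono hG (le_max_left _ _) h))
        (hV' x y (simRel_mono hG (le_max_right _ _) h))⟩
  | @himp U V hU hV ihU ihV =>
    obtain ⟨nU, hU'⟩ := ihU
    obtain ⟨nV, hV'⟩ := ihV
    refine ⟨max nU nV + 1, ?_⟩
    have key : ∀ x y, simRel G (max nU nV + 1) x y → x ∈ himpSet U V → y ∈ himpSet U V := by
      intro x y h hx w hw hwU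
      obtain ⟨z, hz, hzw⟩ := h.2 w hw
      have hzU : z ∈ U := (hU' z w (simRel_mono hG (le_max_left _ _) hzw)).mpr hwU
      exact (hV' z w (simRel_mono hG (le_max_right _ _) hzw)).mp (hx z hz hzU)
    exact fun x y h => ⟨key x y h, key y x (simRel_symm h)⟩

end Aux

lemma hgen_Ici {α : Type*} [PartialOrder α] [Finite α] {G : Set (Set α)}
    (hG : ∀ g ∈ G, IsUpperSet g)
    (hsep : ∀ x y : α, x ≠ y → ∃ n, ¬ simRel G n x y) :
    ∀ x : α, HGen G (Set.Ici x) := by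
  have hwf : WellFoundedGT α := Finite.to_wellFoundedGT
  intro x
  refine hwf.wf.induction (C := fun x => HGen G (Set.Ici x)) x ?_
  clear x
  intro x ih
  classical
  set S : Set α := ⋃ z ∈ {z | x < z}, Set.Ici z with hSdef
  have hSmem : ∀ y, y ∈ S ↔ x < y := by
    intro y
    simp only [hSdef, Set.mem_iUnion, Set.mem_Ici, Set.mem_setOf_eq, exists_prop]
    exact ⟨fun ⟨z, hz, hzy⟩ => lt_of_lt_of_le hz hzy, fun h => ⟨y, h, le_rfl⟩⟩
  have hS : HGen G S := hgen_biUnion (Set.toFinite _) _ fun z hz => ih z hz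
  set A : Set α := (⋃ g ∈ {g | g ∈ G ∧ x ∉ g}, g) ∪
      ⋃ z ∈ {z | x < z}, himpSet (Set.Ici z) (⋃ u ∈ {u | z < u}, Set.Ici u) with hAdef
  have hA : HGen G A := by
    refine HGen.sup (hgen_biUnion (Set.toFinite _) _ fun g hg => HGen.base hg.1) ?_
    refine hgen_biUnion (Set.toFinite _) _ fun z hz => ?_
    exact HGen.himp (ih z hz) (hgen_biUnion (Set.toFinite _) _ fun u hu => ih u (lt_trans hz hu))
  have hAmem : ∀ y, y ∈ A ↔ (∃ g ∈ G, x ∉ g ∧ y ∈ g) ∨ ∃ z, x < z ∧ ¬ y ≤ z := by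
    intro y
    simp only [hAdef, Set.mem_union, Set.mem_iUnion, exists_prop, Set.mem_setOf_eq]
    constructor
    · rintro (⟨g, ⟨hgG, hxg⟩, hyg⟩ | ⟨z, hz, hy⟩)
      · exact Or.inl ⟨g, hgG, hxg, hyg⟩
      · refine Or.inr ⟨z, hz, fun hyz => ?_⟩
        have hz' := hy z hyz le_rfl
        simp only [Set.mem_iUnion, Set.mem_Ici, Set.mem_setOf_eq, exists_prop] at hz'
        obtain ⟨u, hu, huz⟩ := hz'
        exact absurd (lt_of_lt_of_le hu huz) (lt_irrefl z)
    · rintro (⟨g, hgG, hxg, hyg⟩ | ⟨z, hz, hyz⟩)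
      · exact Or.inl ⟨g, ⟨hgG, hxg⟩, hyg⟩
      · refine Or.inr ⟨z, hz, ?_⟩
        intro w hw hzw
        simp only [Set.mem_iUnion, Set.mem_Ici, Set.mem_setOf_eq, exists_prop]
        exact ⟨w, lt_of_le_of_ne hzw fun h => hyz (h ▸ hw), le_rfl⟩
  set C : Set α := ⋂ g ∈ {g | g ∈ G ∧ x ∈ g}, g with hCdef
  have hC : HGen G C := hgen_biInter (Set.toFinite _) _ fun g hg => HGen.base hg.1
  have hCmem : ∀ y, y ∈ C ↔ ∀ g ∈ G, x ∈ g → y ∈ g := by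
    intro y
    simp only [hCdef, Set.mem_iInter, Set.mem_setOf_eq, and_imp]
  have hφ : HGen G (C ∩ himpSet A S) := HGen.inf hC (HGen.himp hA hS)
  -- the key bisimulation claim
  have key : ∀ n : ℕ, ∀ y, y ∈ C ∩ himpSet A S → x ≤ y ∨ simRel G n x y := by
    intro n
    induction n with
    | zero =>
      rintro y ⟨hyC, hyH⟩
      by_cases hxy : x ≤ y
      · exact Or.inl hxy
      refine Or.inr fun g hgG => ⟨fun hxg => (hCmem y).mp hyC g hgG hxg, fun hyg => ?_⟩
      by_contra hxg
      have hyA : y ∈ A := (hAmem y).mpr (Or.inl ⟨g, hgG, hxg, hyg⟩)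
      exact hxy (le_of_lt ((hSmem y).mp (hyH y le_rfl hyA)))
    | succ n ih =>
      rintro y ⟨hyC, hyH⟩
      by_cases hxy : x ≤ y
      · exact Or.inl hxy
      right
      have hyle : ∀ z, x < z → y ≤ z := by
        intro z hz
        by_contra hyz
        have hyA : y ∈ A := (hAmem y).mpr (Or.inr ⟨z, hz, hyz⟩)
        exact hxy (le_of_lt ((hSmem y).mp (hyH y le_rfl hyA)))
      constructor
      · intro z hz
        rcases eq_or_lt_of_le hz with rfl | hz'
        · exact ⟨y, le_rfl, (ih y ⟨hyC, hyH⟩).resolve_left hxy⟩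
        · exact ⟨z, hyle z hz', simRel_refl n z⟩
      · intro w hw
        by_cases hxw : x < w
        · exact ⟨w, le_of_lt hxw, simRel_refl n w⟩
        · have hwφ : w ∈ C ∩ himpSet A S := by
            refine ⟨(hCmem w).mpr fun g hgG hxg => hG g hgG hw ((hCmem y).mp hyC g hgG hxg), ?_⟩
            exact fun u hu huA => hyH u (le_trans hw hu) huA
          rcases ih w hwφ with h | h
          · obtain rfl : x = w := by
              by_contra hne
              exact hxw (lt_of_le_of_ne h hne)
            exact ⟨x, le_rfl, simRel_refl n x⟩
          · exact ⟨x, le_rfl, h⟩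
  have heq : C ∩ himpSet A S = Set.Ici x := by
    apply Set.Subset.antisymm
    · intro y hy
      by_contra hxy
      have hne : x ≠ y := fun h => hxy (le_of_eq h)
      obtain ⟨n, hn⟩ := hsep x y hne
      exact hn ((key n y hy).resolve_left hxy)
    · intro y hy
      have hy' : x ≤ y := hy
      refine ⟨(hCmem y).mpr fun g hgG hxg => hG g hgG hy' hxg, ?_⟩
      intro w hw hwA
      refine (hSmem w).mpr ?_
      have hxw : x ≤ w := le_trans hy' hw
      rcases (hAmem w).mp hwA with ⟨g, hgG, hxg, hwg⟩ | ⟨z, hz, hwz⟩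
      · exact lt_of_le_of_ne hxw fun h => hxg (h ▸ hwg)
      · exact lt_of_le_of_ne hxw fun h => hwz (h ▸ le_of_lt hz)
  rwa [heq] at hφ

/-- A finite poset `P` has its Heyting algebra of upsets generated by a finite
family `G` of upsets iff every point is `G`-isolated, i.e. for all `x ≠ y`
there is `n` with `x ≁^G_n y`. -/
theorem upsets_generated_iff_coloured {α : Type*} [PartialOrder α] [Finite α]
    (G : Set (Set α)) (hG : ∀ g ∈ G, IsUpperSet g) (hGfin : G.Finite) :
    (∀ U : Set α, IsUpperSet U → HGen G U) ↔
      (∀ x y : α, x ≠ y → ∃ n, ¬ simRel G n x y) := by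
  constructor
  · intro h x y hxy
    by_cases hle : x ≤ y
    · have hlt : x < y := lt_of_le_of_ne hle hxy
      obtain ⟨n, hn⟩ := hgen_inv hG (h (Set.Ici y) (isUpperSet_Ici y))
      refine ⟨n, fun hs => ?_⟩
      have : y ≤ x := (hn x y hs).mpr le_rfl
      exact absurd this hlt.not_ge
    · obtain ⟨n, hn⟩ := hgen_inv hG (h (Set.Ici x) (isUpperSet_Ici x))
      refine ⟨n, fun hs => ?_⟩
      exact hle ((hn x y hs).mp le_rfl)
  · intro hsep U hU
    have hUeq : U = ⋃ y ∈ U, Set.Ici y := by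
      ext z
      simp only [Set.mem_iUnion, Set.mem_Ici, exists_prop]
      exact ⟨fun hz => ⟨z, hz, le_rfl⟩, fun ⟨y, hy, hyz⟩ => hU hyz hy⟩
    rw [hUeq]
    exact hgen_biUnion (Set.toFinite _) _ fun y _ => hgen_Ici hG hsep y
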